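/- For m > 1, the kernel of the b-exponent-sum homomorphism |·|_b : B(m,m) → ℤ is a free group of rank m on the generators xᵢ = b^{-(i-1)} a b^{i-1} (i = 1,…,m), and B(m,m) is isomorphic to the semidirect product F_m ⋊ ℤ where the generator 1 ∈ ℤ acts by the automorphism of F_m cyclically permuting the generators (xⱼ ↦ xⱼ₊₁ for j < m, x_m ↦ x₁). -/

import Mathlib

/-- The defining relation of the Baumslag-Solitar group `B(m,n)`:
`a⁻¹ bᵐ a = bⁿ`, where `a` is `FreeGroup.of false` and `b` is `FreeGroup.of true`. -/
def BSrel (m n : ℤ) : Set (FreeGroup Bool) :=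
  {(FreeGroup.of false)⁻¹ * (FreeGroup.of true) ^ m * FreeGroup.of false *
    ((FreeGroup.of true) ^ n)⁻¹}

/-- The Baumslag-Solitar group `B(m,n) = ⟨a, b | a⁻¹ bᵐ a = bⁿ⟩`. -/
abbrev BS (m n : ℤ) : Type := PresentedGroup (BSrel m n)

/-- The generator `a` of `B(m,n)`. -/
def BSa (m n : ℤ) : BS m n := PresentedGroup.of false

/-- The generator `b` of `B(m,n)`. -/
def BSb (m n : ℤ) : BS m n := PresentedGroup.of true

/-- The action of `ℤ` on the free group `F_m` where the generator `1 ∈ ℤ` acts by the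
automorphism cyclically permuting the free generators (`x_j ↦ x_{j+1}`, `x_m ↦ x₁`). -/
def rotAction (m : ℕ) : Multiplicative ℤ →* MulAut (FreeGroup (Fin m)) :=
  zpowersHom _ (FreeGroup.freeGroupCongr (finRotate m))

namespace BSaux

open SemidirectProduct Multiplicative FreeGroup

open Fin.NatCast

lemma bs_rel (m : ℤ) :
    (BSa m m)⁻¹ * BSb m m ^ m * BSa m m * (BSb m m ^ m)⁻¹ = 1 := by
  have h : ((FreeGroup.of false)⁻¹ * (FreeGroup.of true) ^ m * FreeGroup.of false *
      ((FreeGroup.of true) ^ m)⁻¹ : FreeGroup Bool) ∈ Subgroup.normalClosure (BSrel m m) :=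
    Subgroup.subset_normalClosure rfl
  have h2 : PresentedGroup.mk (BSrel m m) ((FreeGroup.of false)⁻¹ * (FreeGroup.of true) ^ m *
      FreeGroup.of false * ((FreeGroup.of true) ^ m)⁻¹) = 1 :=
    (QuotientGroup.eq_one_iff _).2 h
  simp only [_root_.map_mul, _root_.map_inv, map_zpow] at h2
  exact h2

lemma comm_ba (m : ℤ) : BSb m m ^ m * BSa m m = BSa m m * BSb m m ^ m := by
  have h := mul_inv_eq_one.mp (bs_rel m)
  conv_rhs => rw [← h]
  group

lemma conj_congr (m : ℕ) {s t : ℤ} (h : (m : ℤ) ∣ s - t) :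
    BSb m m ^ s * BSa m m * BSb m m ^ (-s) = BSb m m ^ t * BSa m m * BSb m m ^ (-t) := by
  obtain ⟨c, hc⟩ := h
  have hs : s = t + (m : ℤ) * c := by linarith
  subst hs
  have hcomm : BSb m m ^ ((m : ℤ) * c) * BSa m m = BSa m m * BSb m m ^ ((m : ℤ) * c) := by
    rw [zpow_mul]
    exact (Commute.zpow_left (a := BSb m m ^ (m:ℤ)) (comm_ba m) c).eq
  have h1 : BSb m m ^ ((m : ℤ) * c) * BSa m m * BSb m m ^ (-((m : ℤ) * c)) = BSa m m := by
    rw [hcomm]; group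
  conv_rhs => rw [← h1]
  group


lemma sigma_of (m : ℕ) [NeZero m] (i : Fin m) :
    (freeGroupCongr (finRotate m)) (FreeGroup.of i) = FreeGroup.of (i + 1) := by
  rcases m with _ | n
  · exact i.elim0
  · simp [finRotate_succ_apply]

lemma rot_nat (m : ℕ) [NeZero m] (n : ℕ) (i : Fin m) :
    ((freeGroupCongr (finRotate m)) ^ n) (FreeGroup.of i) = FreeGroup.of (i + (n : Fin m)) := by
  induction n generalizing i with
  | zero => simp
  | succ n ih =>
      rw [pow_succ, MulAut.mul_apply, sigma_of, ih]
      congr 1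
      push_cast
      rw [add_assoc, add_comm (1 : Fin m)]

def f1 (m : ℕ) : FreeGroup (Fin m) →* BS m m :=
  FreeGroup.lift fun i => BSb m m ^ (i : ℤ) * BSa m m * BSb m m ^ (-(i : ℤ))

lemma f1_of (m : ℕ) (i : Fin m) :
    f1 m (FreeGroup.of i) = BSb m m ^ (i : ℤ) * BSa m m * BSb m m ^ (-(i : ℤ)) :=
  FreeGroup.lift_apply_of

lemma gen_pt (m : ℕ) [NeZero m] (x : FreeGroup (Fin m)) :
    f1 m ((freeGroupCongr (finRotate m)) x) = BSb m m * f1 m x * (BSb m m)⁻¹ := by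
  have h : (f1 m).comp (freeGroupCongr (finRotate m)).toMonoidHom
      = (MulAut.conj (BSb m m)).toMonoidHom.comp (f1 m) := by
    apply FreeGroup.ext_hom
    intro i
    simp only [MonoidHom.comp_apply, MulEquiv.coe_toMonoidHom, MulAut.conj_apply]
    rw [sigma_of, f1_of, f1_of]
    have key : BSb m m * (BSb m m ^ ((i:ℤ)) * BSa m m * BSb m m ^ (-(i:ℤ))) * (BSb m m)⁻¹
        = BSb m m ^ ((i:ℤ)+1) * BSa m m * BSb m m ^ (-((i:ℤ)+1)) := by group
    rw [key]
    apply conj_congr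
    rcases m with _ | n
    · exact i.elim0
    · by_cases hi : i = Fin.last n
      · subst hi
        refine ⟨-1, ?_⟩
        have h0 : ((Fin.last n + 1 : Fin (n+1)) : ℕ) = 0 := by
          simp [Fin.val_add_one]
        have h1 : ((Fin.last n : Fin (n+1)) : ℕ) = n := Fin.val_last n
        omega
      · have hlt : i < Fin.last n := lt_of_le_of_ne (Fin.le_last i) hi
        have hv : ((i + 1 : Fin (n+1)) : ℕ) = (i : ℕ) + 1 := Fin.val_add_one_of_lt hlt
        refine ⟨0, ?_⟩
        omega
  exact DFunLike.congr_fun h x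

lemma keyP (m : ℕ) [NeZero m] (z : ℤ) (x : FreeGroup (Fin m)) :
    f1 m (((freeGroupCongr (finRotate m)) ^ z) x) = BSb m m ^ z * f1 m x * BSb m m ^ (-z) := by
  induction z using Int.induction_on generalizing x with
  | zero => simp
  | succ n ih =>
      rw [zpow_add_one, MulAut.mul_apply, ih, gen_pt]
      group
  | pred n ih =>
      rw [zpow_sub_one, MulAut.mul_apply, ih]
      have h2 : f1 m ((freeGroupCongr (finRotate m))⁻¹ x)
          = (BSb m m)⁻¹ * f1 m x * BSb m m := by
        have h3 := gen_pt m ((freeGroupCongr (finRotate m))⁻¹ x)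
        rw [MulAut.apply_inv_self] at h3
        rw [h3]; group
      rw [h2]
      group

def f2 (m : ℕ) : Multiplicative ℤ →* BS m m := zpowersHom _ (BSb m m)

def bwd (m : ℕ) [NeZero m] :
    (FreeGroup (Fin m) ⋊[rotAction m] Multiplicative ℤ) →* BS m m :=
  SemidirectProduct.lift (f1 m) (f2 m) (by
    intro g
    apply MonoidHom.ext
    intro x
    simp only [MonoidHom.comp_apply, MulEquiv.coe_toMonoidHom, MulAut.conj_apply]
    have hr : rotAction m g = (freeGroupCongr (finRotate m)) ^ (Multiplicative.toAdd g) := rfl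
    have hf2 : f2 m g = BSb m m ^ (Multiplicative.toAdd g) := rfl
    rw [hr, hf2, keyP]
    rw [← zpow_neg])


lemma ofAdd_one_zpow (z : ℤ) :
    (Multiplicative.ofAdd (1:ℤ)) ^ z = Multiplicative.ofAdd z := by
  rw [← ofAdd_zsmul]
  simp

def bsf (m : ℕ) [NeZero m] : Bool → (FreeGroup (Fin m) ⋊[rotAction m] Multiplicative ℤ) :=
  fun x => bif x then inr (Multiplicative.ofAdd (1:ℤ)) else inl (FreeGroup.of (0 : Fin m))

lemma relcheck (m : ℕ) [NeZero m] :
    ∀ r ∈ BSrel m m, FreeGroup.lift (bsf m) r = 1 := by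
  intro r hr
  rw [BSrel, Set.mem_singleton_iff] at hr
  subst hr
  simp only [_root_.map_mul, _root_.map_inv, map_zpow, FreeGroup.lift_apply_of]
  have hbt : bsf m true = inr (Multiplicative.ofAdd (1:ℤ)) := rfl
  have hbf : bsf m false = inl (FreeGroup.of (0 : Fin m)) := rfl
  rw [hbt, hbf, ← map_zpow, ofAdd_one_zpow]
  have h2 : inr (Multiplicative.ofAdd (m:ℤ)) * inl (FreeGroup.of (0:Fin m)) *
      (inr (Multiplicative.ofAdd (m:ℤ)))⁻¹
      = (inl (FreeGroup.of (0:Fin m)) :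
          FreeGroup (Fin m) ⋊[rotAction m] Multiplicative ℤ) := by
    rw [← _root_.map_inv, ← SemidirectProduct.inl_aut]
    congr 1
    show ((freeGroupCongr (finRotate m)) ^ ((m:ℕ):ℤ)) (FreeGroup.of (0 : Fin m)) = _
    rw [zpow_natCast, rot_nat]
    simp
  rw [mul_assoc, mul_assoc, ← mul_assoc (inr (Multiplicative.ofAdd (m:ℤ))), h2]
  simp

lemma bwd_inl (m : ℕ) [NeZero m] (x : FreeGroup (Fin m)) :
    bwd m (inl x) = f1 m x :=
  SemidirectProduct.lift_inl _ _ _ x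

lemma bwd_inr (m : ℕ) [NeZero m] (g : Multiplicative ℤ) :
    bwd m (inr g) = f2 m g :=
  SemidirectProduct.lift_inr _ _ _ g

def fwd (m : ℕ) [NeZero m] :
    BS m m →* (FreeGroup (Fin m) ⋊[rotAction m] Multiplicative ℤ) :=
  PresentedGroup.toGroup (relcheck m)

lemma fwd_b (m : ℕ) [NeZero m] : fwd m (BSb m m) = inr (Multiplicative.ofAdd (1:ℤ)) :=
  PresentedGroup.toGroup.of (relcheck m)

lemma fwd_a (m : ℕ) [NeZero m] : fwd m (BSa m m) = inl (FreeGroup.of (0 : Fin m)) :=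
  PresentedGroup.toGroup.of (relcheck m)

lemma fwd_conj (m : ℕ) [NeZero m] (i : Fin m) :
    fwd m (BSb m m ^ (i : ℤ) * BSa m m * BSb m m ^ (-(i : ℤ)))
      = inl (FreeGroup.of i) := by
  rw [_root_.map_mul, _root_.map_mul, map_zpow, map_zpow, fwd_a, fwd_b]
  have hz : (inr (Multiplicative.ofAdd (1:ℤ)) :
      FreeGroup (Fin m) ⋊[rotAction m] Multiplicative ℤ) ^ ((i:ℤ))
      = inr (Multiplicative.ofAdd ((i:ℤ))) := by
    rw [← map_zpow, ofAdd_one_zpow]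
  rw [zpow_neg, hz, ← _root_.map_inv, ← SemidirectProduct.inl_aut]
  congr 1
  show ((freeGroupCongr (finRotate m)) ^ ((i:ℤ))) (FreeGroup.of (0 : Fin m)) = _
  rw [zpow_natCast, rot_nat]
  simp

lemma bwd_fwd (m : ℕ) [NeZero m] : (bwd m).comp (fwd m) = MonoidHom.id _ := by
  apply PresentedGroup.ext
  intro x
  cases x
  · show bwd m (fwd m (BSa m m)) = BSa m m
    rw [fwd_a]
    show f1 m (FreeGroup.of (0 : Fin m)) = BSa m m
    rw [f1_of]
    simp
  · show bwd m (fwd m (BSb m m)) = BSb m m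
    rw [fwd_b, bwd_inr]
    have hf : f2 m (Multiplicative.ofAdd (1:ℤ)) = BSb m m ^ (1:ℤ) := rfl
    rw [hf, zpow_one]

lemma fwd_bwd (m : ℕ) [NeZero m] : (fwd m).comp (bwd m) = MonoidHom.id _ := by
  apply SemidirectProduct.hom_ext
  · apply FreeGroup.ext_hom
    intro i
    show fwd m (bwd m (inl (FreeGroup.of i))) = inl (FreeGroup.of i)
    rw [bwd_inl, f1_of, fwd_conj]
  · apply MonoidHom.ext_mint
    show fwd m (bwd m (inr (Multiplicative.ofAdd (1:ℤ)))) = _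
    rw [bwd_inr]
    have hf : f2 m (Multiplicative.ofAdd (1:ℤ)) = BSb m m ^ (1:ℤ) := rfl
    rw [hf, zpow_one, fwd_b]
    simp

end BSaux

/-- For `m > 1`, `B(m,m)` is isomorphic to `F_m ⋊ ℤ` where the generator `1 ∈ ℤ` acts by
cyclically permuting the free generators; the isomorphism sends `b` to the generator of
`ℤ` and the conjugates `b^i a b⁻ⁱ` of `a` to the free generators, so that the kernel of
the `b`-exponent-sum homomorphism is free of rank `m` on these conjugates of `a`. -/
theorem BS_m_m_iso_free_semidirect (m : ℕ) (hm : 1 < m) :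
    ∃ e : BS m m ≃* FreeGroup (Fin m) ⋊[rotAction m] Multiplicative ℤ,
      e (BSb m m) = SemidirectProduct.inr (Multiplicative.ofAdd 1) ∧
      (∀ i : Fin m,
        e (BSb m m ^ (i : ℤ) * BSa m m * BSb m m ^ (-(i : ℤ))) =
          SemidirectProduct.inl (FreeGroup.of i)) ∧
      ∀ π : BS m m →* Multiplicative ℤ,
        π (BSb m m) = Multiplicative.ofAdd 1 → π (BSa m m) = 1 →
          ∀ g : BS m m, g ∈ π.ker ↔ (e g).right = 1 := by
  haveI : NeZero m := ⟨by omega⟩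
  refine ⟨MonoidHom.toMulEquiv (BSaux.fwd m) (BSaux.bwd m)
      (BSaux.bwd_fwd m) (BSaux.fwd_bwd m), ?_, ?_, ?_⟩
  · exact BSaux.fwd_b m
  · exact fun i => BSaux.fwd_conj m i
  · intro π hb ha g
    have hπ : π = SemidirectProduct.rightHom.comp (BSaux.fwd m) := by
      apply PresentedGroup.ext
      intro x
      cases x
      · show π (BSa m m) = SemidirectProduct.rightHom (BSaux.fwd m (BSa m m))
        rw [ha, BSaux.fwd_a, SemidirectProduct.rightHom_inl]
      · show π (BSb m m) = SemidirectProduct.rightHom (BSaux.fwd m (BSb m m))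
        rw [hb, BSaux.fwd_b, SemidirectProduct.rightHom_inr]
    rw [MonoidHom.mem_ker, hπ]
    exact Iff.rfl
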